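/- arXiv:2502.17767 — 2 statements merged into one kernel-verified Lean document; each statement's English description precedes it below -/
import Mathlib

section
/- Let A be an invertible n×n real matrix, b a vector, and x̂ a nonzero vector. The minimum spectral norm of a perturbation ΔA such that (A + ΔA)x̂ = b satisfies ‖ΔA‖ = ‖b - Ax̂‖ / ‖x̂‖. In particular, there exists ΔA with (A+ΔA)x̂ = b and ‖ΔA‖ = ‖b - Ax̂‖/‖x̂‖, and any ΔA with (A+ΔA)x̂ = b satisfies ‖ΔA‖ ≥ ‖b - Ax̂‖/‖x̂‖. -/
open Matrix

noncomputable section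

/-- Spectral (operator `ℓ²`) norm of a real matrix. -/
def sn {n : ℕ} (A : Matrix (Fin n) (Fin n) ℝ) : ℝ :=
  ‖LinearMap.toContinuousLinearMap (Matrix.toEuclideanLin A)‖

/-- Matrix–vector product, as a map on Euclidean space. -/
def mv {n : ℕ} (A : Matrix (Fin n) (Fin n) ℝ) (x : EuclideanSpace ℝ (Fin n)) :
    EuclideanSpace ℝ (Fin n) :=
  Matrix.toEuclideanLin A x

lemma mv_add {n : ℕ} (A B : Matrix (Fin n) (Fin n) ℝ) (x : EuclideanSpace ℝ (Fin n)) :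
    mv (A + B) x = mv A x + mv B x := by
  simp [mv, map_add]

lemma mv_le {n : ℕ} (A : Matrix (Fin n) (Fin n) ℝ) (x : EuclideanSpace ℝ (Fin n)) :
    ‖mv A x‖ ≤ sn A * ‖x‖ := by
  exact (LinearMap.toContinuousLinearMap (Matrix.toEuclideanLin A)).le_opNorm x

/-- Rigal–Gaches: the minimal spectral-norm backward error equals the scaled residual. -/
theorem stmt0 {n : ℕ} (A : Matrix (Fin n) (Fin n) ℝ) (b xh : EuclideanSpace ℝ (Fin n))
    (hA : Invertible A) (hx : xh ≠ 0) :
    (∃ ΔA : Matrix (Fin n) (Fin n) ℝ, mv (A + ΔA) xh = b ∧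
      sn ΔA = ‖b - mv A xh‖ / ‖xh‖) ∧
    (∀ ΔA : Matrix (Fin n) (Fin n) ℝ, mv (A + ΔA) xh = b →
      ‖b - mv A xh‖ / ‖xh‖ ≤ sn ΔA) := by
  have hxn : (0:ℝ) < ‖xh‖ := norm_pos_iff.mpr hx
  set r : EuclideanSpace ℝ (Fin n) := b - mv A xh with hr
  have lower : ∀ ΔA : Matrix (Fin n) (Fin n) ℝ, mv (A + ΔA) xh = b →
      ‖r‖ / ‖xh‖ ≤ sn ΔA := by
    intro ΔA h
    have hΔ : mv ΔA xh = r := by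
      rw [mv_add] at h
      rw [hr, ← h]; abel
    rw [div_le_iff₀ hxn, ← hΔ]
    exact mv_le ΔA xh
  refine ⟨?_, lower⟩
  set ΔA : Matrix (Fin n) (Fin n) ℝ :=
    Matrix.of (fun i j => r i * xh j / ‖xh‖ ^ 2) with hΔA
  have key : ∀ x : EuclideanSpace ℝ (Fin n),
      mv ΔA x = ((inner ℝ xh x : ℝ) / ‖xh‖ ^ 2) • r := by
    intro x
    ext i
    have : (mv ΔA x) i = ∑ j, ΔA i j * x j := by
      simp [mv, Matrix.toEuclideanLin_apply, Matrix.mulVec, dotProduct]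
    rw [this]
    have hin : (inner ℝ xh x : ℝ) = ∑ j, xh j * x j := by
      simp [PiLp.inner_apply, RCLike.inner_apply, conj_trivial, mul_comm]
    simp only [hΔA, Matrix.of_apply, PiLp.smul_apply, smul_eq_mul, hin, Finset.sum_mul,
      Finset.sum_div]
    exact Finset.sum_congr rfl fun j _ => by ring
  have hmv : mv ΔA xh = r := by
    rw [key xh, real_inner_self_eq_norm_sq]
    rw [div_self (by positivity), one_smul]
  have heq : mv (A + ΔA) xh = b := by
    rw [mv_add, hmv, hr]; abel
  refine ⟨ΔA, heq, le_antisymm ?_ (lower ΔA heq)⟩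
  apply ContinuousLinearMap.opNorm_le_bound _ (by positivity)
  intro x
  have : ‖mv ΔA x‖ ≤ ‖r‖ / ‖xh‖ * ‖x‖ := by
    rw [key x, norm_smul]
    have hcs : |(inner ℝ xh x : ℝ)| ≤ ‖xh‖ * ‖x‖ := abs_real_inner_le_norm xh x
    have : ‖(inner ℝ xh x : ℝ) / ‖xh‖ ^ 2‖ ≤ ‖x‖ / ‖xh‖ := by
      rw [Real.norm_eq_abs, abs_div, abs_of_nonneg (by positivity : (0:ℝ) ≤ ‖xh‖^2),
        div_le_div_iff₀ (by positivity) hxn]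
      calc |(inner ℝ xh x : ℝ)| * ‖xh‖ ≤ ‖xh‖ * ‖x‖ * ‖xh‖ := by
            exact mul_le_mul_of_nonneg_right hcs (norm_nonneg _)
        _ = ‖x‖ * ‖xh‖ ^ 2 := by ring
    calc ‖(inner ℝ xh x : ℝ) / ‖xh‖ ^ 2‖ * ‖r‖ ≤ ‖x‖ / ‖xh‖ * ‖r‖ :=
          mul_le_mul_of_nonneg_right this (norm_nonneg _)
      _ = ‖r‖ / ‖xh‖ * ‖x‖ := by ring
  exact this
end
end

section
/- Let M be symmetric positive definite with eigenvalues in [a, b], 0 < a ≤ b, and let c ∈ ℝ^n. For any polynomial p with p(0) = 1 and deg p ≤ k, the vector y = (I − p(M))M⁻¹c lies in the Krylov space span{c, Mc, …, M^{k−1}c} and satisfies ‖M(y − M⁻¹c)‖ ≤ max_{λ∈[a,b]}|p(λ)| · ‖c‖. Hence there exists y in the k-th Krylov space with ‖M‖·‖y − M⁻¹c‖ ≤ (b/a)·2·((√(b/a) − 1)/(√(b/a) + 1))ᵏ·‖c‖. -/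
open Matrix

noncomputable section

section Aux

open Polynomial.Chebyshev

lemma mv_mul {n : ℕ} (A B : Matrix (Fin n) (Fin n) ℝ) (x : EuclideanSpace ℝ (Fin n)) :
    mv (A * B) x = mv A (mv B x) := by
  simp [mv, Matrix.toEuclideanLin_apply, Matrix.mulVec_mulVec]

lemma mv_one {n : ℕ} (x : EuclideanSpace ℝ (Fin n)) : mv 1 x = x := by
  simp [mv, Matrix.toEuclideanLin_apply]

lemma mv_smul {n : ℕ} (A : Matrix (Fin n) (Fin n) ℝ) (r : ℝ) (x : EuclideanSpace ℝ (Fin n)) :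
    mv A (r • x) = r • mv A x :=
  (Matrix.toEuclideanLin A).map_smul r x

lemma mv_basis {n : ℕ} {M : Matrix (Fin n) (Fin n) ℝ} (hM : M.IsHermitian) (i : Fin n) :
    mv M (hM.eigenvectorBasis i) = hM.eigenvalues i • hM.eigenvectorBasis i := by
  have h := hM.mulVec_eigenvectorBasis i
  show (Matrix.toEuclideanLin M) _ = _
  rw [Matrix.toEuclideanLin_apply]
  exact congrArg (WithLp.equiv 2 _).symm h

lemma mv_pow_basis {n : ℕ} {M : Matrix (Fin n) (Fin n) ℝ} (hM : M.IsHermitian) (j : ℕ) (i : Fin n) :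
    mv (M ^ j) (hM.eigenvectorBasis i) = (hM.eigenvalues i) ^ j • hM.eigenvectorBasis i := by
  induction j with
  | zero => simp [mv_one]
  | succ m ih =>
    rw [pow_succ, mv_mul, mv_basis hM i]
    rw [show (mv (M ^ m) (hM.eigenvalues i • hM.eigenvectorBasis i))
        = hM.eigenvalues i • mv (M ^ m) (hM.eigenvectorBasis i) from
      (Matrix.toEuclideanLin (M ^ m)).map_smul _ _]
    rw [ih, smul_smul, pow_succ]
    ring_nf

lemma mv_aeval_basis {n : ℕ} {M : Matrix (Fin n) (Fin n) ℝ} (hM : M.IsHermitian)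
    (p : Polynomial ℝ) (i : Fin n) :
    mv (Polynomial.aeval M p) (hM.eigenvectorBasis i)
      = p.eval (hM.eigenvalues i) • hM.eigenvectorBasis i := by
  rw [Polynomial.aeval_eq_sum_range, Polynomial.eval_eq_sum_range]
  have : mv (∑ j ∈ Finset.range (p.natDegree + 1), p.coeff j • M ^ j) (hM.eigenvectorBasis i)
      = ∑ j ∈ Finset.range (p.natDegree + 1), p.coeff j • mv (M ^ j) (hM.eigenvectorBasis i) := by
    simp [mv, _root_.map_sum]
  rw [this, Finset.sum_smul]
  congr 1; ext j
  rw [mv_pow_basis hM j i, smul_smul]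

lemma eigen_norm_bound {n : ℕ} (A : Matrix (Fin n) (Fin n) ℝ)
    (B : OrthonormalBasis (Fin n) ℝ (EuclideanSpace ℝ (Fin n))) (f : Fin n → ℝ)
    (hact : ∀ i, mv A (B i) = f i • B i) (r : ℝ) (hr : 0 ≤ r) (hf : ∀ i, |f i| ≤ r)
    (x : EuclideanSpace ℝ (Fin n)) : ‖mv A x‖ ≤ r * ‖x‖ := by
  have hx : x = ∑ i, B.repr x i • B i := (B.sum_repr x).symm
  have h1 : mv A x = ∑ i, (f i * B.repr x i) • B i := by
    conv_lhs => rw [hx]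
    rw [show mv A (∑ i, B.repr x i • B i) = ∑ i, B.repr x i • mv A (B i) by
      simp [mv, _root_.map_sum]]
    simp only [hact, smul_smul]
    congr 1; ext i; ring_nf
  have hsum : ∀ (y : EuclideanSpace ℝ (Fin n)), ∑ i, y i • EuclideanSpace.single i (1:ℝ) = y := by
    intro y
    have := (EuclideanSpace.basisFun (Fin n) ℝ).sum_repr y
    simpa [EuclideanSpace.basisFun_apply, EuclideanSpace.basisFun_repr] using this
  have h2 : B.repr (mv A x) = WithLp.toLp 2 (fun i => f i * B.repr x i) := by
    rw [h1, _root_.map_sum]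
    simp only [_root_.map_smul, B.repr_self]
    exact hsum (WithLp.toLp 2 (fun i => f i * B.repr x i))
  have h3 : ‖mv A x‖ = ‖B.repr (mv A x)‖ := (B.repr.norm_map _).symm
  have h4 : ‖x‖ = ‖B.repr x‖ := (B.repr.norm_map _).symm
  rw [h3, h4, h2]
  have e1 : ∀ (y : EuclideanSpace ℝ (Fin n)), ‖y‖ = Real.sqrt (∑ i, (y i)^2) := by
    intro y
    rw [EuclideanSpace.norm_eq]
    simp [Real.norm_eq_abs, sq_abs]
  rw [e1, e1]
  rw [show r = Real.sqrt (r^2) by rw [Real.sqrt_sq hr]]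
  rw [← Real.sqrt_mul (by positivity)]
  apply Real.sqrt_le_sqrt
  rw [Finset.mul_sum]
  apply Finset.sum_le_sum
  intro i _
  have := hf i
  have h5 : (f i)^2 ≤ r^2 := sq_le_sq' (by linarith [abs_nonneg (f i), neg_abs_le (f i)]) (le_trans (le_abs_self _) this)
  calc (f i * B.repr x i)^2 = (f i)^2 * (B.repr x i)^2 := by ring
    _ ≤ r^2 * (B.repr x i)^2 := by nlinarith [sq_nonneg (B.repr x i)]

lemma T_natDegree_le (k : ℕ) : (T ℝ (k : ℤ)).natDegree ≤ k := by
  induction k using Nat.strong_induction_on with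
  | _ k ih =>
    match k with
    | 0 => simp [T_zero]
    | 1 => simp [T_one]
    | (m + 2) =>
      have h2 : T ℝ ((m : ℤ) + 2) = 2 * Polynomial.X * T ℝ ((m : ℤ) + 1) - T ℝ (m : ℤ) :=
        T_add_two ℝ (m : ℤ)
      have : ((m + 2 : ℕ) : ℤ) = (m : ℤ) + 2 := by push_cast; ring
      rw [this, h2]
      apply le_trans (Polynomial.natDegree_sub_le _ _)
      have hm1 : ((m + 1 : ℕ) : ℤ) = (m : ℤ) + 1 := by push_cast; ring
      have i1 := ih (m + 1) (by omega)
      have i0 := ih m (by omega)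
      rw [hm1] at i1
      have hx : (2 * Polynomial.X * T ℝ ((m : ℤ) + 1)).natDegree ≤ m + 2 := by
        apply le_trans (Polynomial.natDegree_mul_le)
        have : (2 * Polynomial.X : Polynomial ℝ).natDegree ≤ 1 := by
          apply le_trans (Polynomial.natDegree_mul_le)
          simp
        omega
      simp only [max_le_iff]
      exact ⟨hx, by omega⟩

lemma T_eval_le_one (k : ℕ) (x : ℝ) (hx : |x| ≤ 1) : |(T ℝ (k : ℤ)).eval x| ≤ 1 := by
  have h1 : -1 ≤ x := by linarith [abs_nonneg x, neg_abs_le x]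
  have h2 : x ≤ 1 := le_trans (le_abs_self x) hx
  have := T_real_cos (Real.arccos x) (k : ℤ)
  rw [Real.cos_arccos h1 h2] at this
  rw [this]
  exact Real.abs_cos_le_one _

lemma T_eval_cosh (k : ℕ) (u : ℝ) : (T ℝ (k : ℤ)).eval (Real.cosh u) = Real.cosh (k * u) := by
  have hℂ : (T ℂ (k : ℤ)).eval (Complex.cosh u) = Complex.cosh (k * u) := by
    have h1 : Complex.cosh (u : ℂ) = Complex.cos ((u : ℂ) * Complex.I) := by
      rw [Complex.cos_mul_I]
    have h2 := T_complex_cos ((u : ℂ) * Complex.I) (k : ℤ)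
    rw [← h1] at h2
    rw [h2]
    rw [show ((k : ℤ) : ℂ) * ((u : ℂ) * Complex.I) = ((k : ℂ) * u) * Complex.I by push_cast; ring]
    rw [Complex.cos_mul_I]
  have hmap : ∀ (y : ℝ), Complex.ofReal ((T ℝ (k : ℤ)).eval y) = (T ℂ (k : ℤ)).eval (y : ℂ) := by
    intro y
    rw [← map_T (algebraMap ℝ ℂ) (k : ℤ), Polynomial.eval_map]
    exact (Polynomial.eval₂_at_apply (algebraMap ℝ ℂ) y).symm
  have := hmap (Real.cosh u)
  rw [Complex.ofReal_cosh] at this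
  rw [hℂ] at this
  have h3 : ((k : ℂ) * u) = ((k * u : ℝ) : ℂ) := by push_cast; ring
  rw [h3, ← Complex.ofReal_cosh] at this
  exact_mod_cast this

lemma cheb_exists (a b : ℝ) (k : ℕ) (ha : 0 < a) (hab : a ≤ b) :
    ∃ p : Polynomial ℝ, p.eval 0 = 1 ∧ p.natDegree ≤ k ∧
      ∀ x ∈ Set.Icc a b, |p.eval x| ≤
        2 * ((Real.sqrt (b / a) - 1) / (Real.sqrt (b / a) + 1)) ^ k := by
  rcases Nat.eq_zero_or_pos k with hk | hk
  · subst hk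
    refine ⟨1, by simp, by simp, ?_⟩
    intro x _
    simp
  rcases eq_or_lt_of_le hab with hba | hba
  · -- a = b
    subst hba
    refine ⟨1 - Polynomial.C a⁻¹ * Polynomial.X, by simp, ?_, ?_⟩
    · refine le_trans (Polynomial.natDegree_sub_le _ _) ?_
      simp only [Polynomial.natDegree_one]
      have : (Polynomial.C a⁻¹ * Polynomial.X : Polynomial ℝ).natDegree ≤ 1 := by
        apply le_trans Polynomial.natDegree_mul_le
        simp
      omega
    · intro x hx
      have hxa : x = a := le_antisymm hx.2 hx.1
      subst hxa
      have h1 : Real.sqrt (x / x) = 1 := by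
        rw [div_self (ne_of_gt ha), Real.sqrt_one]
      rw [h1]
      simp [Polynomial.eval_sub, Polynomial.eval_mul, inv_mul_cancel₀ (ne_of_gt ha),
        zero_pow (by omega : k ≠ 0), sub_self]
  · -- a < b
    set κ := b / a with hκdef
    have hκ : 1 < κ := (one_lt_div ha).mpr hba
    set s := Real.sqrt κ with hsdef
    have hs : 1 < s := by
      rw [hsdef]
      nlinarith [Real.sq_sqrt (by positivity : (0:ℝ) ≤ κ), Real.sqrt_nonneg κ]
    have hs2 : s ^ 2 = κ := Real.sq_sqrt (by positivity)
    set w := (s + 1) / (s - 1) with hwdef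
    have hw : 1 < w := by
      rw [hwdef]
      rw [lt_div_iff₀ (by linarith)]
      linarith
    set u := Real.log w with hudef
    have hu : Real.exp u = w := Real.exp_log (by linarith)
    set t := (a + b) / (b - a) with htdef
    have hba' : (0:ℝ) < b - a := by linarith
    have hs2' : a * s ^ 2 = b := by
      rw [hs2, hκdef]
      field_simp
    have hcosh : Real.cosh u = t := by
      rw [Real.cosh_eq, hu, Real.exp_neg, hu, htdef, hwdef]
      have h1 : s - 1 ≠ 0 := by intro h; nlinarith
      have h2 : s + 1 ≠ 0 := by intro h; nlinarith
      field_simp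
      nlinarith [hs2']
    have hρ : (s - 1) / (s + 1) = w⁻¹ := by
      rw [hwdef]
      rw [inv_div]
    have hTt : (T ℝ (k:ℤ)).eval t = Real.cosh ((k:ℝ) * u) := by
      rw [← hcosh, T_eval_cosh]
    have hwk : Real.exp ((k:ℝ) * u) = w ^ k := by
      rw [← hu, ← Real.exp_nat_mul]
    have hTt_ge : w ^ k / 2 ≤ (T ℝ (k:ℤ)).eval t := by
      rw [hTt, Real.cosh_eq]
      nlinarith [Real.exp_pos (-((k:ℝ) * u)), hwk]
    have hTt_pos : 0 < (T ℝ (k:ℤ)).eval t := lt_of_lt_of_le (by positivity) hTt_ge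
    set Tt := (T ℝ (k:ℤ)).eval t with hTtdef
    refine ⟨Polynomial.C Tt⁻¹ *
      (T ℝ (k:ℤ)).comp (Polynomial.C t - Polynomial.C (2 / (b - a)) * Polynomial.X), ?_, ?_, ?_⟩
    · simp only [Polynomial.eval_mul, Polynomial.eval_C, Polynomial.eval_comp,
        Polynomial.eval_sub, Polynomial.eval_X, mul_zero, sub_zero]
      exact inv_mul_cancel₀ (ne_of_gt hTt_pos)
    · refine le_trans Polynomial.natDegree_mul_le ?_
      rw [Polynomial.natDegree_C, zero_add]
      refine le_trans Polynomial.natDegree_comp_le ?_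
      have h1 : (Polynomial.C t - Polynomial.C (2 / (b - a)) * Polynomial.X : Polynomial ℝ).natDegree ≤ 1 := by
        refine le_trans (Polynomial.natDegree_sub_le _ _) ?_
        simp only [Polynomial.natDegree_C, max_le_iff]
        exact ⟨by omega, le_trans Polynomial.natDegree_mul_le (by simp)⟩
      calc (T ℝ (k:ℤ)).natDegree * (Polynomial.C t - Polynomial.C (2 / (b - a)) * Polynomial.X).natDegree
          ≤ k * 1 := Nat.mul_le_mul (T_natDegree_le k) h1
        _ = k := by omega
    · intro x hx
      have hy : t - 2 / (b - a) * x = (a + b - 2 * x) / (b - a) := by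
        rw [htdef]; field_simp
      have hy1 : |t - 2 / (b - a) * x| ≤ 1 := by
        rw [hy, abs_le]
        constructor
        · rw [le_div_iff₀ hba']
          nlinarith [hx.2]
        · rw [div_le_one hba']
          nlinarith [hx.1]
      have hTy := T_eval_le_one k _ hy1
      have hinv : Tt⁻¹ ≤ 2 * w⁻¹ ^ k := by
        have h1 : 0 < w ^ k / 2 := by positivity
        have := inv_anti₀ h1 hTt_ge
        rw [inv_div] at this
        calc Tt⁻¹ ≤ 2 / w ^ k := this
          _ = 2 * w⁻¹ ^ k := by rw [inv_pow]; ring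
      simp only [Polynomial.eval_mul, Polynomial.eval_C, Polynomial.eval_comp,
        Polynomial.eval_sub, Polynomial.eval_X, abs_mul]
      rw [hρ]
      have habs : |Tt⁻¹| = Tt⁻¹ := abs_of_pos (by positivity)
      rw [habs]
      calc Tt⁻¹ * |(T ℝ (k:ℤ)).eval (t - 2 / (b - a) * x)| ≤ Tt⁻¹ * 1 := by
            apply mul_le_mul_of_nonneg_left hTy (by positivity)
        _ = Tt⁻¹ := mul_one _
        _ ≤ 2 * w⁻¹ ^ k := hinv

end Aux

/-- Exact-arithmetic Krylov (Lanczos) solve guarantee for an spd matrix with spectrum in [a,b]. -/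
theorem stmt13 {n : ℕ} (M : Matrix (Fin n) (Fin n) ℝ) (c : EuclideanSpace ℝ (Fin n))
    (a b : ℝ) (k : ℕ) (ha : 0 < a) (hab : a ≤ b)
    (hsymm : M.IsHermitian) (hspec : ∀ μ ∈ spectrum ℝ M, μ ∈ Set.Icc a b)
    (hinv : Invertible M) :
    (∀ p : Polynomial ℝ, p.eval 0 = 1 → p.natDegree ≤ k →
      mv ((1 - Polynomial.aeval M p) * M⁻¹) c ∈
          Submodule.span ℝ (Set.range fun j : Fin k => mv (M ^ (j : ℕ)) c) ∧
        ∀ bd : ℝ, (∀ x ∈ Set.Icc a b, |p.eval x| ≤ bd) →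
          ‖mv M (mv ((1 - Polynomial.aeval M p) * M⁻¹) c - mv M⁻¹ c)‖ ≤ bd * ‖c‖) ∧
    ∃ y ∈ Submodule.span ℝ (Set.range fun j : Fin k => mv (M ^ (j : ℕ)) c),
      sn M * ‖y - mv M⁻¹ c‖ ≤
        (b / a) * 2 * ((Real.sqrt (b / a) - 1) / (Real.sqrt (b / a) + 1)) ^ k * ‖c‖ := by
  haveI := hinv
  have heig : ∀ i, hsymm.eigenvalues i ∈ Set.Icc a b := fun i =>
    hspec _ (hsymm.eigenvalues_mem_spectrum_real i)
  have part1 : ∀ p : Polynomial ℝ, p.eval 0 = 1 → p.natDegree ≤ k →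
      mv ((1 - Polynomial.aeval M p) * M⁻¹) c ∈
          Submodule.span ℝ (Set.range fun j : Fin k => mv (M ^ (j : ℕ)) c) ∧
        ∀ bd : ℝ, (∀ x ∈ Set.Icc a b, |p.eval x| ≤ bd) →
          ‖mv M (mv ((1 - Polynomial.aeval M p) * M⁻¹) c - mv M⁻¹ c)‖ ≤ bd * ‖c‖ := by
    intro p hp0 hpdeg
    set q : Polynomial ℝ := (1 - p).divX with hqdef
    have hc0 : (1 - p).coeff 0 = 0 := by
      rw [Polynomial.coeff_sub, Polynomial.coeff_zero_eq_eval_zero, Polynomial.coeff_zero_eq_eval_zero]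
      simp [hp0]
    have hqX : q * Polynomial.X = 1 - p := by
      have := Polynomial.divX_mul_X_add (1 - p)
      rwa [hc0, _root_.map_zero, add_zero] at this
    have hfact : (1 - Polynomial.aeval M p) * M⁻¹ = Polynomial.aeval M q := by
      have h1 : (1 : Matrix (Fin n) (Fin n) ℝ) - Polynomial.aeval M p
          = Polynomial.aeval M q * M := by
        rw [show Polynomial.aeval M q * M = Polynomial.aeval M (q * Polynomial.X) by
          rw [_root_.map_mul, Polynomial.aeval_X]]
        rw [hqX, _root_.map_sub, _root_.map_one]
      rw [h1, mul_assoc, Matrix.mul_inv_of_invertible, mul_one]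
    constructor
    · rw [hfact]
      by_cases hq0 : q = 0
      · rw [hq0, _root_.map_zero]
        have : mv (0 : Matrix (Fin n) (Fin n) ℝ) c = 0 := by
          simp [mv]
        rw [this]
        exact Submodule.zero_mem _
      · have h1p : (1 : Polynomial ℝ) - p ≠ 0 := by
          intro h
          rw [h, Polynomial.divX_zero] at hqdef
          exact hq0 hqdef
        have hd1 : 1 ≤ (1 - p).natDegree := by
          by_contra h
          push_neg at h
          interval_cases h' : (1 - p).natDegree
          · have := Polynomial.eq_C_of_natDegree_eq_zero h'
            rw [this] at hc0 h1p
            rw [Polynomial.coeff_C_zero] at hc0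
            rw [hc0, _root_.map_zero] at h1p
            exact h1p rfl
        have hdsub : (1 - p).natDegree ≤ k := by
          refine le_trans (Polynomial.natDegree_sub_le _ _) ?_
          simp only [Polynomial.natDegree_one, max_le_iff]
          exact ⟨by omega, hpdeg⟩
        have hqdeg : q.natDegree + 1 ≤ k := by
          have := Polynomial.natDegree_divX_eq_natDegree_tsub_one (p := 1 - p)
          rw [← hqdef] at this
          omega
        have hexp : mv (Polynomial.aeval M q) c
            = ∑ j ∈ Finset.range (q.natDegree + 1), q.coeff j • mv (M ^ j) c := by
          rw [Polynomial.aeval_eq_sum_range]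
          simp [mv, _root_.map_sum]
        rw [hexp]
        apply Submodule.sum_mem
        intro j hj
        rw [Finset.mem_range] at hj
        apply Submodule.smul_mem
        apply Submodule.subset_span
        exact ⟨⟨j, by omega⟩, rfl⟩
    · intro bd hbd
      set P := Polynomial.aeval M p with hPdef
      have hcomm : M * P = P * M := by
        calc M * P = Polynomial.aeval M Polynomial.X * Polynomial.aeval M p := by
              rw [Polynomial.aeval_X]
          _ = Polynomial.aeval M (Polynomial.X * p) := (_root_.map_mul _ _ _).symm
          _ = Polynomial.aeval M (p * Polynomial.X) := by rw [mul_comm]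
          _ = P * M := by rw [_root_.map_mul, Polynomial.aeval_X]
      have hMM : M * ((1 - P) * M⁻¹) - M * M⁻¹ = -P := by
        have h1 : M * (1 - P) = (1 - P) * M := by
          rw [mul_sub, sub_mul, mul_one, one_mul, hcomm]
        rw [← mul_assoc, h1, mul_assoc, Matrix.mul_inv_of_invertible, mul_one]
        abel
      have hrw : mv M (mv ((1 - P) * M⁻¹) c - mv M⁻¹ c) = mv (-P) c := by
        rw [show mv M (mv ((1 - P) * M⁻¹) c - mv M⁻¹ c)
            = mv M (mv ((1 - P) * M⁻¹) c) - mv M (mv M⁻¹ c) from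
          (Matrix.toEuclideanLin M).map_sub _ _]
        rw [← mv_mul, ← mv_mul, ← hMM]
        rw [show mv (M * ((1 - P) * M⁻¹) - M * M⁻¹) c
            = mv (M * ((1 - P) * M⁻¹)) c - mv (M * M⁻¹) c by
          simp [mv, _root_.map_sub]]
      rw [hrw]
      have hneg : mv (-P) c = -(mv P c) := by simp [mv, _root_.map_neg]
      rw [hneg, norm_neg]
      have hbd0 : 0 ≤ bd := le_trans (abs_nonneg _) (hbd a ⟨le_refl a, hab⟩)
      exact eigen_norm_bound P hsymm.eigenvectorBasis
        (fun i => p.eval (hsymm.eigenvalues i)) (fun i => mv_aeval_basis hsymm p i)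
        bd hbd0 (fun i => hbd _ (heig i)) c
  refine ⟨part1, ?_⟩
  obtain ⟨p, hp0, hpdeg, hpbd⟩ := cheb_exists a b k ha hab
  obtain ⟨hmem, hnorm⟩ := part1 p hp0 hpdeg
  set ρ : ℝ := (Real.sqrt (b / a) - 1) / (Real.sqrt (b / a) + 1) with hρdef
  set y := mv ((1 - Polynomial.aeval M p) * M⁻¹) c with hydef
  refine ⟨y, hmem, ?_⟩
  set e := y - mv M⁻¹ c with hedef
  have h1 : ‖mv M e‖ ≤ (2 * ρ ^ k) * ‖c‖ := hnorm _ hpbd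
  have hb0 : (0:ℝ) < b := lt_of_lt_of_le ha hab
  -- sn M ≤ b
  have hsnM : sn M ≤ b := by
    apply ContinuousLinearMap.opNorm_le_bound _ hb0.le
    intro x
    exact eigen_norm_bound M hsymm.eigenvectorBasis hsymm.eigenvalues
      (fun i => mv_basis hsymm i) b hb0.le
      (fun i => by
        have := heig i
        rw [abs_le]
        exact ⟨by linarith [this.1], this.2⟩) x
  -- inverse eigen action
  have hinvbasis : ∀ i, mv M⁻¹ (hsymm.eigenvectorBasis i)
      = (hsymm.eigenvalues i)⁻¹ • hsymm.eigenvectorBasis i := by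
    intro i
    have hlam : hsymm.eigenvalues i ≠ 0 := ne_of_gt (lt_of_lt_of_le ha (heig i).1)
    have h2 : hsymm.eigenvectorBasis i = hsymm.eigenvalues i • mv M⁻¹ (hsymm.eigenvectorBasis i) := by
      calc hsymm.eigenvectorBasis i = mv (M⁻¹ * M) (hsymm.eigenvectorBasis i) := by
            rw [Matrix.inv_mul_of_invertible, mv_one]
        _ = mv M⁻¹ (mv M (hsymm.eigenvectorBasis i)) := mv_mul _ _ _
        _ = mv M⁻¹ (hsymm.eigenvalues i • hsymm.eigenvectorBasis i) := by rw [mv_basis hsymm i]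
        _ = hsymm.eigenvalues i • mv M⁻¹ (hsymm.eigenvectorBasis i) :=
            mv_smul M⁻¹ _ _
    calc mv M⁻¹ (hsymm.eigenvectorBasis i)
        = (hsymm.eigenvalues i)⁻¹ • (hsymm.eigenvalues i • mv M⁻¹ (hsymm.eigenvectorBasis i)) := by
          rw [smul_smul, inv_mul_cancel₀ hlam, one_smul]
      _ = (hsymm.eigenvalues i)⁻¹ • hsymm.eigenvectorBasis i := by rw [← h2]
  have he : ‖e‖ ≤ a⁻¹ * ‖mv M e‖ := by
    have h2 : e = mv M⁻¹ (mv M e) := by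
      rw [← mv_mul, Matrix.inv_mul_of_invertible, mv_one]
    conv_lhs => rw [h2]
    exact eigen_norm_bound M⁻¹ hsymm.eigenvectorBasis (fun i => (hsymm.eigenvalues i)⁻¹)
      hinvbasis a⁻¹ (by positivity)
      (fun i => by
        have h3 := heig i
        have h4 : 0 < hsymm.eigenvalues i := lt_of_lt_of_le ha h3.1
        rw [abs_of_pos (by positivity)]
        exact inv_anti₀ ha h3.1) (mv M e)
  have hsn0 : 0 ≤ sn M := norm_nonneg _
  calc sn M * ‖e‖ ≤ b * ‖e‖ := mul_le_mul_of_nonneg_right hsnM (norm_nonneg _)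
    _ ≤ b * (a⁻¹ * ‖mv M e‖) := mul_le_mul_of_nonneg_left he hb0.le
    _ ≤ b * (a⁻¹ * ((2 * ρ ^ k) * ‖c‖)) := by
        apply mul_le_mul_of_nonneg_left _ hb0.le
        apply mul_le_mul_of_nonneg_left h1 (by positivity)
    _ = (b / a) * 2 * ρ ^ k * ‖c‖ := by
        field_simp
end
end
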